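/- Let Λ be an ℝ-linear map on n×n complex matrices and Λ* a trace adjoint of Λ. Let ρ, σ be positive definite matrices such that Λ(ρ) and Λ(σ) are positive definite. If σ^{1/2}·(σ^{1/2}·ρ·σ^{1/2})^{-1/2}·σ^{1/2} = Λ*(Λ(σ)^{1/2}·(Λ(σ)^{1/2}·Λ(ρ)·Λ(σ)^{1/2})^{-1/2}·Λ(σ)^{1/2}), then F(ρ,σ) = F(Λ(ρ),Λ(σ)). -/

import Mathlib

open Matrix
open scoped ComplexOrder

/-- The real power `A^t` of a Hermitian matrix, via the continuous functional calculus. -/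
noncomputable def matPow {n : Type*} [Fintype n] [DecidableEq n]
    (A : Matrix n n ℂ) (t : ℝ) : Matrix n n ℂ :=
  cfc (fun x : ℝ => x ^ t) A

/-- The fidelity `F(ρ,σ) = tr((σ^{1/2} ρ σ^{1/2})^{1/2})` of positive definite matrices. -/
noncomputable def fidelity {n : Type*} [Fintype n] [DecidableEq n]
    (ρ σ : Matrix n n ℂ) : ℝ :=
  ((matPow (matPow σ (1/2) * ρ * matPow σ (1/2)) (1/2)).trace).re


section AuxFidelity
variable {n : Type*} [Fintype n] [DecidableEq n]

/-- Conjugation of a positive definite matrix by an invertible matrix is positive definite. -/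
lemma posDef_conjTranspose_mul_mul {A B : Matrix n n ℂ} (hA : A.PosDef) (hB : IsUnit B) :
    (Bᴴ * A * B).PosDef := by
  exact hA.conjTranspose_mul_mul_same (Matrix.mulVec_injective_iff_isUnit.mpr hB)

lemma spectrum_pos_of_posDef {A : Matrix n n ℂ} (hA : A.PosDef) :
    ∀ x ∈ spectrum ℝ A, 0 < x := by
  intro x hx
  rw [hA.isHermitian.spectrum_real_eq_range_eigenvalues] at hx
  obtain ⟨i, rfl⟩ := hx
  exact hA.eigenvalues_pos i

lemma posDef_cfc {A : Matrix n n ℂ} (hA : A.PosDef) (f : ℝ → ℝ)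
    (hf : ∀ x ∈ spectrum ℝ A, 0 < f x) : (cfc f A).PosDef := by
  rw [hA.1.cfc_eq, Matrix.IsHermitian.cfc]
  have hD : (Matrix.diagonal (RCLike.ofReal ∘ f ∘ hA.1.eigenvalues) : Matrix n n ℂ).PosDef := by
    rw [Matrix.posDef_diagonal_iff]
    intro i
    have := hf _ (hA.1.eigenvalues_mem_spectrum_real i)
    simpa using Complex.zero_lt_real.mpr this
  have hU : IsUnit (star (hA.1.eigenvectorUnitary : Matrix n n ℂ)) := by
    have := hA.1.eigenvectorUnitary.2
    rw [Unitary.mem_iff] at this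
    exact ⟨⟨star (hA.1.eigenvectorUnitary : Matrix n n ℂ),
      (hA.1.eigenvectorUnitary : Matrix n n ℂ), this.1, this.2⟩, rfl⟩
  have := posDef_conjTranspose_mul_mul hD hU
  simpa [star_eq_conjTranspose, conjTranspose_conjTranspose] using this

lemma matPow_posDef {A : Matrix n n ℂ} (hA : A.PosDef) (t : ℝ) : (matPow A t).PosDef := by
  refine posDef_cfc hA _ fun x hx => ?_
  exact Real.rpow_pos_of_pos (spectrum_pos_of_posDef hA x hx) t

lemma matPow_neg_half_mul {M : Matrix n n ℂ} (hM : M.PosDef) :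
    matPow M (-(1/2)) * M = matPow M (1/2) := by
  have hsa : IsSelfAdjoint M := hM.1
  have hc : ∀ (c : ℝ), ContinuousOn (fun x : ℝ => x ^ c) (spectrum ℝ M) := fun c x hx =>
    (Real.continuousAt_rpow_const x c
      (Or.inl (spectrum_pos_of_posDef hM x hx).ne')).continuousWithinAt
  have key : cfc (fun x : ℝ => x ^ (-(1/2) : ℝ)) M * cfc (fun x : ℝ => x) M
      = cfc (fun x : ℝ => x ^ ((1/2) : ℝ)) M := by
    rw [← cfc_mul (fun x : ℝ => x ^ (-(1/2) : ℝ)) (fun x : ℝ => x) M (hc _) continuousOn_id]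
    refine cfc_congr fun x hx => ?_
    have hx0 := spectrum_pos_of_posDef hM x hx
    nth_rewrite 2 [← Real.rpow_one x]
    rw [← Real.rpow_add hx0]
    norm_num
  rw [matPow, matPow, ← key, cfc_id' ℝ M hsa]

lemma trace_helper {S ρ : Matrix n n ℂ} (h : (S * ρ * S).PosDef) :
    ((S * matPow (S * ρ * S) (-(1/2)) * S) * ρ).trace = (matPow (S * ρ * S) (1/2)).trace := by
  set X := matPow (S * ρ * S) (-(1/2)) with hX
  rw [mul_assoc (S * X), Matrix.trace_mul_comm, ← mul_assoc (S * ρ),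
    Matrix.trace_mul_comm, matPow_neg_half_mul h]

end AuxFidelity

/-- The operator equation
`σ^{1/2}(σ^{1/2}ρσ^{1/2})^{-1/2}σ^{1/2} = Λ*(Λ(σ)^{1/2}(Λ(σ)^{1/2}Λ(ρ)Λ(σ)^{1/2})^{-1/2}Λ(σ)^{1/2})`
implies saturation of the data processing inequality for the fidelity. -/
theorem fidelity_dpi_saturation_of_operator_eq
    {n : Type*} [Fintype n] [DecidableEq n] [Nonempty n]
    (Λ Λstar : Matrix n n ℂ →ₗ[ℝ] Matrix n n ℂ)
    (hadj : ∀ A B : Matrix n n ℂ, (Λstar A * B).trace = (A * Λ B).trace)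
    (ρ σ : Matrix n n ℂ) (hρ : ρ.PosDef) (hσ : σ.PosDef)
    (hΛρ : (Λ ρ).PosDef) (hΛσ : (Λ σ).PosDef)
    (hop : matPow σ (1/2) * matPow (matPow σ (1/2) * ρ * matPow σ (1/2)) (-(1/2)) * matPow σ (1/2)
      = Λstar (matPow (Λ σ) (1/2)
          * matPow (matPow (Λ σ) (1/2) * Λ ρ * matPow (Λ σ) (1/2)) (-(1/2))
          * matPow (Λ σ) (1/2))) :
    fidelity ρ σ = fidelity (Λ ρ) (Λ σ) := by
  have hS : (matPow σ (1/2)).PosDef := matPow_posDef hσ _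
  have hT : (matPow (Λ σ) (1/2)).PosDef := matPow_posDef hΛσ _
  set S := matPow σ (1/2) with hSdef
  set T := matPow (Λ σ) (1/2) with hTdef
  have hM : (S * ρ * S).PosDef := by
    have := posDef_conjTranspose_mul_mul hρ hS.isUnit
    rwa [hS.1.eq] at this
  have hN : (T * Λ ρ * T).PosDef := by
    have := posDef_conjTranspose_mul_mul hΛρ hT.isUnit
    rwa [hT.1.eq] at this
  have key : (matPow (S * ρ * S) (1/2)).trace = (matPow (T * Λ ρ * T) (1/2)).trace := by
    rw [← trace_helper hM, hop, hadj, trace_helper hN]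
  unfold fidelity
  rw [← hSdef, ← hTdef, key]
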